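/- arXiv:2408.13700 — 4 statements merged into one kernel-verified Lean document; each statement's English description precedes it below -/
import Mathlib

section
/- Let a, b ∈ ℂ be distinct and let p = a + s(b−a) with 0 < s < 1 be a point of the open segment from a to b, and set ν = i(b−a). Then the one-sided limits η₊(p) = lim_{t→0⁺} η(p + tν) and η₋(p) = lim_{t→0⁺} η(p − tν) of η(z) = ((z−b)/(z−a))^{1/4} exist, are nonzero, and satisfy the jump relation η₊(p) = i·η₋(p). Explicitly, η₊(p) = ((1−s)/s)^{1/4} e^{iπ/4} and η₋(p) = ((1−s)/s)^{1/4} e^{−iπ/4}, where ((1−s)/s)^{1/4} is the positive real fourth root. -/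
open Complex Filter Real

lemma expI_half : Complex.exp (Complex.I * Real.pi / 2) = Complex.I := by
  have : (Complex.I * Real.pi / 2 : ℂ) = ((Real.pi : ℂ) / 2) * Complex.I := by ring
  rw [this, Complex.exp_mul_I]
  simp

lemma aux_tendsto (s : ℝ) (hs0 : 0 < s) (hs1 : s < 1) (σ : ℝ) (hσ : σ = 1 ∨ σ = -1) :
    Tendsto (fun t : ℝ => (((s : ℂ) - 1 + (σ * t : ℝ) * Complex.I) / ((s : ℂ) + (σ * t : ℝ) * Complex.I)) ^ ((1 : ℂ)/4))
      (nhdsWithin 0 (Set.Ioi 0))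
      (nhds (((((1 - s) / s) ^ ((1 : ℝ) / 4) : ℝ) : ℂ) * Complex.exp (σ * (Complex.I * Real.pi / 4)))) := by
  have hr : (0:ℝ) < (1 - s) / s := div_pos (by linarith) hs0
  set w : ℝ → ℂ := fun t => ((s : ℂ) - 1 + (σ * t : ℝ) * Complex.I) / ((s : ℂ) + (σ * t : ℝ) * Complex.I) with hw
  have hsne : ((s:ℂ)) ≠ 0 := by exact_mod_cast hs0.ne'
  set w0 : ℂ := (((s - 1) / s : ℝ) : ℂ) with hw0
  have hw0re : w0.re < 0 := by
    simpa [hw0] using div_neg_of_neg_of_pos (by linarith : s - 1 < 0) hs0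
  have hw0im : w0.im = 0 := by simp [hw0]
  have habs : ‖w0‖ = (1 - s) / s := by
    rw [hw0, Complex.norm_real, Real.norm_eq_abs, abs_of_neg (div_neg_of_neg_of_pos (by linarith) hs0)]
    ring
  have hcont : Tendsto w (nhdsWithin 0 (Set.Ioi 0)) (nhds w0) := by
    have hc : ContinuousAt w 0 := by
      apply ContinuousAt.div
      · fun_prop
      · fun_prop
      · simpa using hsne
    have h0 : w 0 = w0 := by
      simp only [hw, hw0, mul_zero, Complex.ofReal_zero, zero_mul, add_zero]
      push_cast
      ring
    exact tendsto_nhdsWithin_of_tendsto_nhds (h0 ▸ hc.tendsto)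
  have hden : ∀ t : ℝ, Complex.normSq ((s : ℂ) + (σ * t : ℝ) * Complex.I) = s^2 + (σ*t)^2 := by
    intro t
    simp [Complex.normSq_apply]
    ring
  have him : ∀ t : ℝ, (w t).im = σ * t / (s^2 + (σ*t)^2) := by
    intro t
    rw [hw]
    simp only [Complex.div_im]
    rw [hden]
    simp
    ring
  have hL : Tendsto (fun t => Complex.log (w t)) (nhdsWithin 0 (Set.Ioi 0))
      (nhds ((Real.log (‖w0‖) : ℂ) + (σ:ℂ) * Real.pi * Complex.I)) := by
    rcases hσ with h | h
    · subst h
      have hmem : ∀ᶠ t in nhdsWithin 0 (Set.Ioi 0), w t ∈ {z : ℂ | 0 ≤ z.im} := by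
        filter_upwards [self_mem_nhdsWithin] with t ht
        have ht' : (0:ℝ) < t := ht
        simp only [Set.mem_setOf_eq, him t]
        positivity
      have h1 : Tendsto w (nhdsWithin 0 (Set.Ioi 0)) (nhdsWithin w0 {z : ℂ | 0 ≤ z.im}) :=
        tendsto_nhdsWithin_iff.mpr ⟨hcont, hmem⟩
      have h2 := (Complex.tendsto_log_nhdsWithin_im_nonneg_of_re_neg_of_im_zero hw0re hw0im).comp h1
      convert h2 using 2
      · rfl
      push_cast
      ring
    · subst h
      have hmem : ∀ᶠ t in nhdsWithin 0 (Set.Ioi 0), w t ∈ {z : ℂ | z.im < 0} := by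
        filter_upwards [self_mem_nhdsWithin] with t ht
        have ht' : (0:ℝ) < t := ht
        simp only [Set.mem_setOf_eq, him t]
        apply div_neg_of_neg_of_pos
        · nlinarith
        · positivity
      have h1 : Tendsto w (nhdsWithin 0 (Set.Ioi 0)) (nhdsWithin w0 {z : ℂ | z.im < 0}) :=
        tendsto_nhdsWithin_iff.mpr ⟨hcont, hmem⟩
      have h2 := (Complex.tendsto_log_nhdsWithin_im_neg_of_re_neg_of_im_zero hw0re hw0im).comp h1
      convert h2 using 2
      · rfl
      push_cast
      ring
  have h3 : Tendsto (fun t => Complex.exp (Complex.log (w t) * ((1:ℂ)/4)))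
      (nhdsWithin 0 (Set.Ioi 0))
      (nhds (Complex.exp (((Real.log (‖w0‖) : ℂ) + (σ:ℂ) * Real.pi * Complex.I) * ((1:ℂ)/4)))) :=
    (Complex.continuous_exp.tendsto _).comp (hL.mul_const _)
  have heq : ∀ᶠ t in nhdsWithin 0 (Set.Ioi 0),
      Complex.exp (Complex.log (w t) * ((1:ℂ)/4)) = w t ^ ((1:ℂ)/4) := by
    filter_upwards [self_mem_nhdsWithin] with t ht
    have ht' : (0:ℝ) < t := ht
    have hσ' : σ ≠ 0 := by rcases hσ with h | h <;> simp [h]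
    have hwne : w t ≠ 0 := by
      intro h0
      have h1 := him t
      rw [h0, Complex.zero_im] at h1
      have hd : (0:ℝ) < s^2 + (σ*t)^2 := by positivity
      rcases div_eq_zero_iff.mp h1.symm with h2 | h2
      · rcases hσ with h | h <;> subst h <;> simp at h2 <;> exact ht'.ne' h2
      · linarith
    rw [Complex.cpow_def_of_ne_zero hwne]
  have h4 := h3.congr' heq
  convert h4 using 2
  rw [habs, Real.rpow_def_of_pos hr, Complex.ofReal_exp, ← Complex.exp_add]
  congr 1
  push_cast
  ring

/-- Boundary values of the one-cut model function `η(z) = ((z−b)/(z−a))^{1/4}` (principal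
branch) at an interior point `p = a + s(b−a)` of the band: the one-sided limits from the
left (`+tν`) and right (`−tν`) sides, `ν = i(b−a)`, exist, are nonzero, are given explicitly
by `((1−s)/s)^{1/4} e^{±iπ/4}`, and satisfy the jump relation `η₊ = i·η₋`. -/
theorem oneCutEta_boundary_jump (a b : ℂ) (hab : a ≠ b) (s : ℝ) (hs0 : 0 < s) (hs1 : s < 1) :
    let η : ℂ → ℂ := fun z => ((z - b) / (z - a)) ^ ((1 : ℂ) / 4)
    let p : ℂ := a + (s : ℂ) * (b - a)
    let ν : ℂ := Complex.I * (b - a)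
    let ηp : ℂ := ((((1 - s) / s) ^ ((1 : ℝ) / 4) : ℝ) : ℂ) * Complex.exp (Complex.I * Real.pi / 4)
    let ηm : ℂ := ((((1 - s) / s) ^ ((1 : ℝ) / 4) : ℝ) : ℂ) * Complex.exp (-(Complex.I * Real.pi / 4))
    Tendsto (fun t : ℝ => η (p + (t : ℂ) * ν)) (nhdsWithin 0 (Set.Ioi 0)) (nhds ηp) ∧
    Tendsto (fun t : ℝ => η (p - (t : ℂ) * ν)) (nhdsWithin 0 (Set.Ioi 0)) (nhds ηm) ∧
    ηp ≠ 0 ∧ ηm ≠ 0 ∧ ηp = Complex.I * ηm := by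
  intro η p ν ηp ηm
  have hba : (b - a) ≠ 0 := sub_ne_zero.mpr (Ne.symm hab)
  have hr : (0:ℝ) < (1 - s)/s := div_pos (by linarith) hs0
  have hre : ((((1 - s) / s) ^ ((1 : ℝ) / 4) : ℝ) : ℂ) ≠ 0 := by
    exact_mod_cast (Real.rpow_pos_of_pos hr _).ne'
  refine ⟨?_, ?_, ?_, ?_, ?_⟩
  · have h := aux_tendsto s hs0 hs1 1 (Or.inl rfl)
    simp only [one_mul] at h
    convert h using 2 with t
    · show ((p + t * ν - b) / (p + t * ν - a)) ^ ((1:ℂ)/4) = _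
      have h1 : p + t * ν - b = ((s : ℂ) - 1 + (t:ℝ) * Complex.I) * (b - a) := by
        simp only [p, ν]; push_cast; ring
      have h2 : p + t * ν - a = ((s : ℂ) + (t:ℝ) * Complex.I) * (b - a) := by
        simp only [p, ν]; push_cast; ring
      rw [h1, h2, mul_div_mul_right _ _ hba]
    · show ηp = _
      simp only [ηp]
      norm_num
  · have h := aux_tendsto s hs0 hs1 (-1) (Or.inr rfl)
    convert h using 2 with t
    · show ((p - t * ν - b) / (p - t * ν - a)) ^ ((1:ℂ)/4) = _
      have h1 : p - t * ν - b = ((s : ℂ) - 1 + ((-1 * t :ℝ) : ℂ) * Complex.I) * (b - a) := by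
        simp only [p, ν]; push_cast; ring
      have h2 : p - t * ν - a = ((s : ℂ) + ((-1 * t :ℝ) : ℂ) * Complex.I) * (b - a) := by
        simp only [p, ν]; push_cast; ring
      rw [h1, h2, mul_div_mul_right _ _ hba]
    · show ηm = _
      simp only [ηm]
      push_cast
      ring_nf
  · exact mul_ne_zero hre (Complex.exp_ne_zero _)
  · exact mul_ne_zero hre (Complex.exp_ne_zero _)
  · show ηp = Complex.I * ηm
    simp only [ηp, ηm]
    rw [mul_left_comm]
    congr 1
    nth_rewrite 2 [← expI_half]
    rw [← Complex.exp_add]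
    congr 1
    ring
end

section
/- Let Γ⁺ be a measurable subset of the open upper half-plane {z ∈ ℂ : Im z > 0}, λ a measure on Γ⁺, and σ, u, v : Γ⁺ → ℝ measurable functions with u(z) > 0 for all z ∈ Γ⁺. Define Δ(z,w) = log|(w − conj(z))/(w − z)|, s₀(z) = −4·Re z, and s(z) = v(z)/u(z). Assume that for every z ∈ Γ⁺ the functions w ↦ Δ(z,w)u(w) and w ↦ Δ(z,w)v(w) are λ-integrable and that the nonlinear dispersion relations hold: ∫_{Γ⁺} Δ(z,w) u(w) dλ(w) + σ(z) u(z) = Im z and ∫_{Γ⁺} Δ(z,w) v(w) dλ(w) + σ(z) v(z) = −2·Im(z²). Then for every z ∈ Γ⁺ the equation of state holds: s(z) = s₀(z) + (1/Im z) · ∫_{Γ⁺} Δ(z,w) (s(z) − s(w)) u(w) dλ(w). -/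
open MeasureTheory Complex

/-- The soliton-gas interaction kernel `Δ(z,w) = log|(w − conj z)/(w − z)|`. -/
noncomputable def gasKernel (z w : ℂ) : ℝ :=
  Real.log ‖(w - (starRingEnd ℂ) z) / (w - z)‖

/-- The free soliton speed `s₀(z) = −4 Re z`. -/
def freeSpeed (z : ℂ) : ℝ := -4 * z.re

/-- The equation of state for the fNLS soliton gas follows from the nonlinear dispersion
relations: if `u > 0` and `v` satisfy the NDR on a measurable set `Γ⁺` contained in the
open upper half-plane, then the effective speed `s = v/u` satisfies
`s(z) = s₀(z) + (1/Im z) ∫ Δ(z,w)(s(z) − s(w)) u(w) dλ(w)`. -/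
theorem equation_of_state
    (Γ : Set ℂ) (hΓmeas : MeasurableSet Γ) (hΓup : ∀ z ∈ Γ, 0 < z.im)
    (lam : Measure ℂ)
    (σ u v : ℂ → ℝ) (hσmeas : Measurable σ) (humeas : Measurable u) (hvmeas : Measurable v)
    (hupos : ∀ z ∈ Γ, 0 < u z)
    (hintu : ∀ z ∈ Γ, IntegrableOn (fun w => gasKernel z w * u w) Γ lam)
    (hintv : ∀ z ∈ Γ, IntegrableOn (fun w => gasKernel z w * v w) Γ lam)
    (hNDRu : ∀ z ∈ Γ, (∫ w in Γ, gasKernel z w * u w ∂lam) + σ z * u z = z.im)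
    (hNDRv : ∀ z ∈ Γ, (∫ w in Γ, gasKernel z w * v w ∂lam) + σ z * v z = -2 * (z ^ 2).im) :
    ∀ z ∈ Γ,
      v z / u z =
        freeSpeed z +
          (1 / z.im) *
            ∫ w in Γ, gasKernel z w * (v z / u z - v w / u w) * u w ∂lam := by
  intro z hz
  have him : z.im ≠ 0 := ne_of_gt (hΓup z hz)
  have huz : u z ≠ 0 := ne_of_gt (hupos z hz)
  set s : ℝ := v z / u z with hs
  have hcongr : ∀ w ∈ Γ,
      gasKernel z w * (s - v w / u w) * u w
        = s * (gasKernel z w * u w) - gasKernel z w * v w := by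
    intro w hw
    have huw : u w ≠ 0 := ne_of_gt (hupos w hw)
    field_simp
  have hint : (∫ w in Γ, gasKernel z w * (s - v w / u w) * u w ∂lam)
      = ∫ w in Γ, (s * (gasKernel z w * u w) - gasKernel z w * v w) ∂lam := by
    refine setIntegral_congr_fun hΓmeas ?_
    intro w hw
    exact hcongr w hw
  have hsplit : (∫ w in Γ, (s * (gasKernel z w * u w) - gasKernel z w * v w) ∂lam)
      = s * (∫ w in Γ, gasKernel z w * u w ∂lam) - ∫ w in Γ, gasKernel z w * v w ∂lam := by
    rw [integral_sub ((hintu z hz).const_mul s) (hintv z hz), MeasureTheory.integral_const_mul]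
  have hu := hNDRu z hz
  have hv := hNDRv z hz
  have hIu : (∫ w in Γ, gasKernel z w * u w ∂lam) = z.im - σ z * u z := by linarith
  have hIv : (∫ w in Γ, gasKernel z w * v w ∂lam) = -2 * (z ^ 2).im - σ z * v z := by linarith
  have him2 : (z ^ 2).im = 2 * z.re * z.im := by
    rw [sq, Complex.mul_im]; ring
  rw [hint, hsplit, hIu, hIv, him2, freeSpeed, hs]
  field_simp
  ring
end

section
/- Let A ⊂ ℂ be compact, μ a finite Borel measure on ℂ supported in A, n ≥ 1 an integer, 𝔞₁,…,𝔞ₙ pairwise disjoint measurable sets with union A, ζ₁,…,ζₙ ∈ ℂ, c₁,…,cₙ ∈ ℂ, β : ℂ → ℂ, and α ∈ (0,1], L, M, c > 0, ε₁, ε₂ ≥ 0, 0 < r ≤ 1. Assume: (i) |n·c_k − β(ζ_k)| ≤ ε₁ for each k; (ii) |n·μ(𝔞_k) − 1| ≤ ε₂ for each k; (iii) |ζ_k − ξ| ≤ r for every ξ ∈ 𝔞_k and each k; (iv) |β(ζ)| ≤ M and |β(ζ) − β(ζ′)| ≤ L|ζ − ζ′|^α for all ζ, ζ′ ∈ A ∪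 {ζ₁,…,ζₙ}; (v) z ∈ ℂ satisfies |z − ζ| ≥ c for all ζ ∈ A ∪ {ζ₁,…,ζₙ}. Then there exists a constant K > 0 depending only on c, M, L and μ(A) (and not on n, z, or the points ζ_k) such that |Σ_{k=1}^n c_k/(ζ_k − z) − ∫_A β(ζ)/(ζ − z) dμ(ζ)| ≤ K·(ε₁ + ε₂ + r^α). (This is the Riemann-sum-to-Cauchy-integral estimate of the convergence proposition in the case where the accumulation set is separated from the contour.) -/
open MeasureTheory

set_option maxHeartbeats 1000000 in
/-- Riemann-sum-to-Cauchy-integral estimate (separated case): if the points `ζ_k` with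
weights `c_k ≈ β(ζ_k)/n` sample a measure `μ` on a compact set `A` via a partition
`𝔞_1, …, 𝔞_n`, with `β` bounded and `α`-Hölder, and `z` is at distance at least `c` from
`A` and from all the `ζ_k`, then the discrete Cauchy sum approximates the Cauchy integral
with error `K(ε₁ + ε₂ + r^α)`, where `K` depends only on `c, M, L` and `μ(A)`. -/
theorem riemann_sum_to_cauchy_integral
    (c M L V : ℝ) (hc : 0 < c) (hM : 0 < M) (hL : 0 < L) :
    ∃ K : ℝ, 0 < K ∧
      ∀ (A : Set ℂ) (μ : Measure ℂ), IsFiniteMeasure μ → IsCompact A → μ Aᶜ = 0 →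
        (μ A).toReal = V →
        ∀ (n : ℕ), 1 ≤ n →
          ∀ (𝔞 : Fin n → Set ℂ), (∀ k, MeasurableSet (𝔞 k)) →
            (Pairwise fun i j => Disjoint (𝔞 i) (𝔞 j)) →
            (⋃ k, 𝔞 k) = A →
            ∀ (ζ cs : Fin n → ℂ) (β : ℂ → ℂ) (α : ℝ), α ∈ Set.Ioc (0 : ℝ) 1 →
              ∀ (ε₁ ε₂ r : ℝ), 0 ≤ ε₁ → 0 ≤ ε₂ → 0 < r → r ≤ 1 →
                (∀ k, ‖(n : ℂ) * cs k - β (ζ k)‖ ≤ ε₁) →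
                (∀ k, |(n : ℝ) * (μ (𝔞 k)).toReal - 1| ≤ ε₂) →
                (∀ k, ∀ ξ ∈ 𝔞 k, ‖ζ k - ξ‖ ≤ r) →
                (∀ w ∈ A ∪ Set.range ζ, ‖β w‖ ≤ M) →
                (∀ w ∈ A ∪ Set.range ζ, ∀ w' ∈ A ∪ Set.range ζ,
                  ‖β w - β w'‖ ≤ L * ‖w - w'‖ ^ α) →
                ∀ z : ℂ, (∀ w ∈ A ∪ Set.range ζ, c ≤ ‖z - w‖) →
                  ‖(∑ k, cs k / (ζ k - z)) - ∫ w in A, β w / (w - z) ∂μ‖ ≤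
                    K * (ε₁ + ε₂ + r ^ α) := by
  refine ⟨(1 + M) / c + (L / c + M / c ^ 2) * (|V| + 1), by positivity, ?_⟩
  intro A μ hfin hA hAc hV n hn 𝔞 h𝔞m h𝔞d h𝔞U ζ cs β α hα ε₁ ε₂ r hε₁ hε₂ hr hr1
    H1 H2 H3 HM HL z hz
  obtain ⟨hα0, hα1⟩ := hα
  have hnR : (0:ℝ) < n := by exact_mod_cast hn
  have hnC : (n:ℂ) ≠ 0 := by exact_mod_cast (by positivity : (n:ℝ) ≠ 0)
  have hsubA : ∀ k, 𝔞 k ⊆ A := fun k => h𝔞U ▸ Set.subset_iUnion 𝔞 k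
  have hdist : ∀ w ∈ A ∪ Set.range ζ, c ≤ ‖w - z‖ := fun w hw => by
    rw [norm_sub_rev]; exact hz w hw
  have hne : ∀ w ∈ A ∪ Set.range ζ, w - z ≠ 0 := fun w hw => by
    intro h
    have := hdist w hw
    rw [h, norm_zero] at this
    linarith
  have hζmem : ∀ k, ζ k ∈ A ∪ Set.range ζ := fun k => Or.inr ⟨k, rfl⟩
  have hrα0 : (0:ℝ) ≤ r ^ α := Real.rpow_nonneg hr.le α
  have hrr : r ≤ r ^ α := by
    calc r = r ^ (1:ℝ) := (Real.rpow_one r).symm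
      _ ≤ r ^ α := Real.rpow_le_rpow_of_exponent_ge hr hr1 hα1
  -- continuity of β on A
  have hβc : ContinuousOn β A := by
    intro w hw
    rw [ContinuousWithinAt, tendsto_iff_norm_sub_tendsto_zero]
    have h0 : Filter.Tendsto (fun ξ : ℂ => L * ‖ξ - w‖ ^ α) (nhdsWithin w A) (nhds 0) := by
      have h1 : Filter.Tendsto (fun ξ : ℂ => ‖ξ - w‖) (nhdsWithin w A) (nhds 0) := by
        have hcont : Continuous (fun ξ : ℂ => ‖ξ - w‖) := (continuous_sub_right w).norm
        simpa using (hcont.tendsto w).mono_left nhdsWithin_le_nhds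
      have h2 := (Real.continuousAt_rpow_const 0 α (Or.inr hα0.le)).tendsto.comp h1
      rw [Real.zero_rpow (ne_of_gt hα0)] at h2
      simpa using h2.const_mul L
    refine squeeze_zero' (Filter.Eventually.of_forall fun ξ => norm_nonneg _) ?_ h0
    filter_upwards [self_mem_nhdsWithin] with ξ hξ
    exact HL ξ (Or.inl hξ) w (Or.inl hw)
  have hfc : ContinuousOn (fun w => β w / (w - z)) A :=
    hβc.div ((continuous_id.sub continuous_const).continuousOn)
      (fun w hw => hne w (Or.inl hw))
  have hint : IntegrableOn (fun w => β w / (w - z)) A μ :=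
    hfc.integrableOn_compact hA
  have hVsum : ∑ k, (μ (𝔞 k)).toReal = V := by
    rw [← ENNReal.toReal_sum (fun k _ => measure_ne_top μ _), ← tsum_fintype (L := SummationFilter.unconditional _),
      ← measure_iUnion h𝔞d h𝔞m, h𝔞U, hV]
  have hsplit : ∫ w in A, β w / (w - z) ∂μ = ∑ k, ∫ w in 𝔞 k, β w / (w - z) ∂μ := by
    rw [← h𝔞U]
    exact integral_iUnion_fintype h𝔞m h𝔞d (fun k => hint.mono_set (hsubA k))
  set C₃ : ℝ := (L / c + M / c ^ 2) * r ^ α with hC₃def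
  have key : ∀ k, ‖cs k / (ζ k - z) - ∫ w in 𝔞 k, β w / (w - z) ∂μ‖ ≤
      ε₁ / (n * c) + M * ε₂ / (n * c) + C₃ * (μ (𝔞 k)).toReal := by
    intro k
    have haz : ζ k - z ≠ 0 := hne _ (hζmem k)
    have hazc : c ≤ ‖ζ k - z‖ := hdist _ (hζmem k)
    have hik : IntegrableOn (fun w => β w / (w - z)) (𝔞 k) μ := hint.mono_set (hsubA k)
    have hconst : IntegrableOn (fun _ : ℂ => β (ζ k) / (ζ k - z)) (𝔞 k) μ :=
      integrableOn_const (measure_ne_top μ _)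
    have hdecomp : cs k / (ζ k - z) - ∫ w in 𝔞 k, β w / (w - z) ∂μ =
        ((n : ℂ) * cs k - β (ζ k)) / ((n : ℂ) * (ζ k - z))
        + ((1 / n - (μ (𝔞 k)).toReal : ℝ)) • (β (ζ k) / (ζ k - z))
        + ∫ w in 𝔞 k, (β (ζ k) / (ζ k - z) - β w / (w - z)) ∂μ := by
      rw [integral_sub hconst hik, setIntegral_const, measureReal_def, Complex.real_smul, Complex.real_smul]
      push_cast
      field_simp
      ring
    rw [hdecomp]
    have hb1 : ‖((n : ℂ) * cs k - β (ζ k)) / ((n : ℂ) * (ζ k - z))‖ ≤ ε₁ / (n * c) := by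
      rw [norm_div, norm_mul, Complex.norm_natCast]
      exact div_le_div₀ hε₁ (H1 k) (by positivity)
        (mul_le_mul_of_nonneg_left hazc hnR.le)
    have hb2 : ‖((1 / n - (μ (𝔞 k)).toReal : ℝ)) • (β (ζ k) / (ζ k - z))‖ ≤
        M * ε₂ / (n * c) := by
      rw [norm_smul, Real.norm_eq_abs, norm_div]
      have h2' : |1 / (n:ℝ) - (μ (𝔞 k)).toReal| ≤ ε₂ / n := by
        rw [show (1 / (n:ℝ) - (μ (𝔞 k)).toReal) =
          -(((n:ℝ) * (μ (𝔞 k)).toReal - 1) / n) by field_simp; ring]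
        rw [abs_neg, abs_div, abs_of_pos hnR]
        gcongr
        exact H2 k
      have h2'' : ‖β (ζ k)‖ / ‖ζ k - z‖ ≤ M / c :=
        div_le_div₀ hM.le (HM _ (hζmem k)) hc hazc
      calc |1 / (n:ℝ) - (μ (𝔞 k)).toReal| * (‖β (ζ k)‖ / ‖ζ k - z‖)
          ≤ (ε₂ / n) * (M / c) :=
            mul_le_mul h2' h2'' (by positivity) (by positivity)
        _ = M * ε₂ / (n * c) := by ring
    have hb3 : ‖∫ w in 𝔞 k, (β (ζ k) / (ζ k - z) - β w / (w - z)) ∂μ‖ ≤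
        C₃ * (μ (𝔞 k)).toReal := by
      apply norm_setIntegral_le_of_norm_le_const (measure_lt_top μ _)
      · intro ξ hξ
        have hξA : ξ ∈ A := hsubA k hξ
        have hξm : ξ ∈ A ∪ Set.range ζ := Or.inl hξA
        have hξz : ξ - z ≠ 0 := hne ξ hξm
        have hξzc : c ≤ ‖ξ - z‖ := hdist ξ hξm
        have hsplit2 : β (ζ k) / (ζ k - z) - β ξ / (ξ - z) =
            (β (ζ k) - β ξ) / (ζ k - z) + β ξ * (ξ - ζ k) / ((ζ k - z) * (ξ - z)) := by
          field_simp
          ring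
        rw [hsplit2]
        have e1 : ‖(β (ζ k) - β ξ) / (ζ k - z)‖ ≤ L * r ^ α / c := by
          rw [norm_div]
          refine div_le_div₀ (by positivity) ?_ hc hazc
          calc ‖β (ζ k) - β ξ‖ ≤ L * ‖ζ k - ξ‖ ^ α := HL _ (hζmem k) _ hξm
            _ ≤ L * r ^ α := mul_le_mul_of_nonneg_left
                (Real.rpow_le_rpow (norm_nonneg _) (H3 k ξ hξ) hα0.le) hL.le
        have e2 : ‖β ξ * (ξ - ζ k) / ((ζ k - z) * (ξ - z))‖ ≤ M * r ^ α / c ^ 2 := by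
          rw [norm_div, norm_mul, norm_mul]
          refine div_le_div₀ (by positivity) ?_ (by positivity) ?_
          · have : ‖ξ - ζ k‖ ≤ r := by rw [norm_sub_rev]; exact H3 k ξ hξ
            exact mul_le_mul (HM _ hξm) (this.trans hrr) (norm_nonneg _) hM.le
          · calc c ^ 2 = c * c := sq c
              _ ≤ ‖ζ k - z‖ * ‖ξ - z‖ := mul_le_mul hazc hξzc hc.le (by linarith)
        calc ‖(β (ζ k) - β ξ) / (ζ k - z) + β ξ * (ξ - ζ k) / ((ζ k - z) * (ξ - z))‖
            ≤ ‖(β (ζ k) - β ξ) / (ζ k - z)‖ + ‖β ξ * (ξ - ζ k) / ((ζ k - z) * (ξ - z))‖ :=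
              norm_add_le _ _
          _ ≤ L * r ^ α / c + M * r ^ α / c ^ 2 := add_le_add e1 e2
          _ = C₃ := by rw [hC₃def]; ring
    calc ‖((n : ℂ) * cs k - β (ζ k)) / ((n : ℂ) * (ζ k - z))
          + ((1 / n - (μ (𝔞 k)).toReal : ℝ)) • (β (ζ k) / (ζ k - z))
          + ∫ w in 𝔞 k, (β (ζ k) / (ζ k - z) - β w / (w - z)) ∂μ‖
        ≤ ‖((n : ℂ) * cs k - β (ζ k)) / ((n : ℂ) * (ζ k - z))
          + ((1 / n - (μ (𝔞 k)).toReal : ℝ)) • (β (ζ k) / (ζ k - z))‖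
          + ‖∫ w in 𝔞 k, (β (ζ k) / (ζ k - z) - β w / (w - z)) ∂μ‖ := norm_add_le _ _
      _ ≤ (‖((n : ℂ) * cs k - β (ζ k)) / ((n : ℂ) * (ζ k - z))‖
          + ‖((1 / n - (μ (𝔞 k)).toReal : ℝ)) • (β (ζ k) / (ζ k - z))‖)
          + ‖∫ w in 𝔞 k, (β (ζ k) / (ζ k - z) - β w / (w - z)) ∂μ‖ := by
            gcongr
            exact norm_add_le _ _
      _ ≤ ε₁ / (n * c) + M * ε₂ / (n * c) + C₃ * (μ (𝔞 k)).toReal := by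
            refine add_le_add (add_le_add hb1 hb2) hb3
  have hV0 : 0 ≤ V := hV ▸ ENNReal.toReal_nonneg
  calc ‖(∑ k, cs k / (ζ k - z)) - ∫ w in A, β w / (w - z) ∂μ‖
      = ‖∑ k, (cs k / (ζ k - z) - ∫ w in 𝔞 k, β w / (w - z) ∂μ)‖ := by
        rw [hsplit, Finset.sum_sub_distrib]
    _ ≤ ∑ k, ‖cs k / (ζ k - z) - ∫ w in 𝔞 k, β w / (w - z) ∂μ‖ := norm_sum_le _ _
    _ ≤ ∑ k : Fin n, (ε₁ / (n * c) + M * ε₂ / (n * c) + C₃ * (μ (𝔞 k)).toReal) :=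
        Finset.sum_le_sum (fun k _ => key k)
    _ = ε₁ / c + M * ε₂ / c + C₃ * V := by
        rw [Finset.sum_add_distrib, Finset.sum_add_distrib, Finset.sum_const,
          ← Finset.mul_sum, hVsum, Finset.card_univ, Fintype.card_fin, nsmul_eq_mul,
          Finset.sum_const, Finset.card_univ, Fintype.card_fin, nsmul_eq_mul]
        field_simp
    _ ≤ ((1 + M) / c + (L / c + M / c ^ 2) * (|V| + 1)) * (ε₁ + ε₂ + r ^ α) := by
        rw [abs_of_nonneg hV0, hC₃def]
        have hK1 : 1 / c ≤ (1 + M) / c + (L / c + M / c ^ 2) * (V + 1) := by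
          have h1 : 1 / c ≤ (1 + M) / c := by gcongr; linarith
          nlinarith [mul_nonneg (by positivity : (0:ℝ) ≤ L / c + M / c ^ 2)
            (by linarith : (0:ℝ) ≤ V + 1)]
        have hK2 : M / c ≤ (1 + M) / c + (L / c + M / c ^ 2) * (V + 1) := by
          have h1 : M / c ≤ (1 + M) / c := by gcongr; linarith
          nlinarith [mul_nonneg (by positivity : (0:ℝ) ≤ L / c + M / c ^ 2)
            (by linarith : (0:ℝ) ≤ V + 1)]
        have hK3 : (L / c + M / c ^ 2) * V ≤
            (1 + M) / c + (L / c + M / c ^ 2) * (V + 1) := by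
          have h1 : (L / c + M / c ^ 2) * V ≤ (L / c + M / c ^ 2) * (V + 1) :=
            mul_le_mul_of_nonneg_left (by linarith) (by positivity)
          have h2 : (0:ℝ) ≤ (1 + M) / c := by positivity
          linarith
        have a1 := mul_le_mul_of_nonneg_right hK1 hε₁
        have a2 := mul_le_mul_of_nonneg_right hK2 hε₂
        have a3 := mul_le_mul_of_nonneg_right hK3 hrα0
        have hdist3 : ((1 + M) / c + (L / c + M / c ^ 2) * (V + 1)) * (ε₁ + ε₂ + r ^ α)
            = ((1 + M) / c + (L / c + M / c ^ 2) * (V + 1)) * ε₁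
            + ((1 + M) / c + (L / c + M / c ^ 2) * (V + 1)) * ε₂
            + ((1 + M) / c + (L / c + M / c ^ 2) * (V + 1)) * r ^ α := by ring
        rw [hdist3]
        refine add_le_add (add_le_add ?_ ?_) ?_
        · calc ε₁ / c = 1 / c * ε₁ := by ring
            _ ≤ _ := a1
        · calc M * ε₂ / c = M / c * ε₂ := by ring
            _ ≤ _ := a2
        · calc (L / c + M / c ^ 2) * r ^ α * V = (L / c + M / c ^ 2) * V * r ^ α := by ring
            _ ≤ _ := a3
end

section
/- Let A ⊂ ℂ be compact, λ a finite Borel measure on ℂ supported in A, z₀ ∈ ℂ, d ≥ 1 a real number, and C₁, C₂, c₃ > 0 constants such that λ(B(z₀,δ)) ≤ C₁·δ^d for every δ > 0, where B(z₀,δ) is the closed ball of radius δ. Then there exist constants C > 0 and r₀ ∈ (0,1] (depending only on C₁, C₂, c₃, d, λ(A)) such that for every 0 < r ≤ r₀, every n ≥ 1, every family of pairwise disjoint measurable sets 𝔞₁,…,𝔞ₙ with union A, and every choice of points ζ₁,…,ζₙ ∈ ℂ satisfying |ζ_k − ζ| ≤ C₂·r for all ζ ∈ 𝔞_k and |ζ_k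 − z₀| ≥ c₃·r for each k, one has Σ_{k=1}^n ∫_{𝔞_k} |ζ_k − ζ|/|ζ_k − z₀| dλ(ζ) ≤ C·r^{d/(1+d)}. -/
open MeasureTheory

/-- The error bound `𝔈₂` in the touching case: if the reference measure `lam` of balls
around the contact point `z₀` grows like `δ^d`, then the partition sums
`Σ_k ∫_{𝔞_k} |ζ_k − ζ|/|ζ_k − z₀| dλ(ζ)` are `O(r^{d/(1+d)})` uniformly over admissible
partitions and sample points. -/
theorem touching_error_bound
    (A : Set ℂ) (hA : IsCompact A)
    (lam : Measure ℂ) [IsFiniteMeasure lam] (hsupp : lam Aᶜ = 0)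
    (z₀ : ℂ) (d : ℝ) (hd : 1 ≤ d)
    (C₁ C₂ c₃ : ℝ) (hC₁ : 0 < C₁) (hC₂ : 0 < C₂) (hc₃ : 0 < c₃)
    (hball : ∀ δ : ℝ, 0 < δ → (lam (Metric.closedBall z₀ δ)).toReal ≤ C₁ * δ ^ d) :
    ∃ C : ℝ, 0 < C ∧ ∃ r₀ : ℝ, 0 < r₀ ∧ r₀ ≤ 1 ∧
      ∀ r : ℝ, 0 < r → r ≤ r₀ →
        ∀ n : ℕ, 1 ≤ n →
          ∀ 𝔞 : Fin n → Set ℂ, (∀ k, MeasurableSet (𝔞 k)) →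
            (Pairwise fun i j => Disjoint (𝔞 i) (𝔞 j)) → (⋃ k, 𝔞 k) = A →
            ∀ ζ : Fin n → ℂ,
              (∀ k, ∀ w ∈ 𝔞 k, ‖ζ k - w‖ ≤ C₂ * r) →
              (∀ k, c₃ * r ≤ ‖ζ k - z₀‖) →
              (∑ k, ∫ w in 𝔞 k, ‖ζ k - w‖ / ‖ζ k - z₀‖ ∂lam) ≤ C * r ^ (d / (1 + d)) := by
  classical
  set L := (lam Set.univ).toReal with hLdef
  have hL0 : 0 ≤ L := ENNReal.toReal_nonneg
  refine ⟨C₂ * C₁ / c₃ + 2 * C₂ * L + 1, by positivity,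
    min 1 (1 / (4 * C₂ ^ 2)), by positivity, min_le_left _ _, ?_⟩
  intro r hr hrr₀ n hn 𝔞 h𝔞m h𝔞d h𝔞U ζ hζ hζz
  have hd0 : (0:ℝ) < 1 + d := by linarith
  set α : ℝ := d / (1 + d) with hαdef
  have hα0 : 0 < α := by positivity
  set δ : ℝ := r ^ (1 / (1 + d)) with hδdef
  have hδ0 : 0 < δ := Real.rpow_pos_of_pos hr _
  have hr1 : r ≤ 1 := le_trans hrr₀ (min_le_left _ _)
  have hR0 : 0 < r ^ α := Real.rpow_pos_of_pos hr _
  -- r = r^α * δ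
  have hsplit : r = r ^ α * δ := by
    rw [hδdef, hαdef, ← Real.rpow_add hr]
    have : d / (1 + d) + 1 / (1 + d) = 1 := by field_simp; ring
    rw [this, Real.rpow_one]
  -- 2 * C₂ * r^α ≤ 1
  have h2 : 2 * C₂ * r ^ α ≤ 1 := by
    have h12 : (1:ℝ)/2 ≤ α := by
      rw [hαdef, div_le_div_iff₀ (by norm_num) hd0]; linarith
    have ha : r ^ α ≤ r ^ ((1:ℝ)/2) :=
      Real.rpow_le_rpow_of_exponent_ge hr hr1 h12
    have hb : r ^ ((1:ℝ)/2) ≤ (1 / (4 * C₂ ^ 2)) ^ ((1:ℝ)/2) :=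
      Real.rpow_le_rpow hr.le (le_trans hrr₀ (min_le_right _ _)) (by norm_num)
    have hc : (1 / (4 * C₂ ^ 2) : ℝ) ^ ((1:ℝ)/2) = 1 / (2 * C₂) := by
      have h4 : (1 / (4 * C₂ ^ 2) : ℝ) = (1 / (2 * C₂)) ^ (2:ℕ) := by
        field_simp; ring
      rw [h4, ← Real.rpow_natCast (1 / (2 * C₂)) 2, ← Real.rpow_mul (by positivity)]
      norm_num
    have : r ^ α ≤ 1 / (2 * C₂) := le_trans ha (by rw [hc] at hb; exact hb)
    calc 2 * C₂ * r ^ α ≤ 2 * C₂ * (1 / (2 * C₂)) := by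
          apply mul_le_mul_of_nonneg_left this (by positivity)
      _ = 1 := by field_simp
  have hkey : 2 * (C₂ * r) ≤ δ := by
    calc 2 * (C₂ * r) = 2 * C₂ * r ^ α * δ := by conv_lhs => rw [hsplit]
                                                 ring
      _ ≤ 1 * δ := mul_le_mul_of_nonneg_right h2 hδ0.le
      _ = δ := one_mul δ
  -- r / δ = r ^ α
  have hrδ : r / δ = r ^ α := by
    conv_lhs => rw [hsplit]
    rw [mul_div_assoc, div_self hδ0.ne', mul_one]
  set B := Metric.closedBall z₀ δ with hBdef
  have hBm : MeasurableSet B := measurableSet_closedBall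
  -- integrability
  have hζz' : ∀ k, (0:ℝ) < ‖ζ k - z₀‖ := fun k => lt_of_lt_of_le (by positivity) (hζz k)
  have hint : ∀ k, IntegrableOn (fun w => ‖ζ k - w‖ / ‖ζ k - z₀‖) (𝔞 k) lam := by
    intro k
    apply Integrable.mono' (integrable_const (C₂ * r / (c₃ * r)))
    · exact ((continuous_const.sub continuous_id).norm.div_const _).aestronglyMeasurable
    · filter_upwards [ae_restrict_mem (h𝔞m k)] with w hw
      rw [Real.norm_eq_abs, abs_of_nonneg (by positivity)]
      exact div_le_div₀ (by positivity) (hζ k w hw) (by positivity) (hζz k)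
  -- pointwise bounds
  have hnear : ∀ k, ∀ w ∈ 𝔞 k ∩ B, ‖ζ k - w‖ / ‖ζ k - z₀‖ ≤ C₂ / c₃ := by
    intro k w hw
    have : ‖ζ k - w‖ / ‖ζ k - z₀‖ ≤ C₂ * r / (c₃ * r) :=
      div_le_div₀ (by positivity) (hζ k w hw.1) (by positivity) (hζz k)
    rwa [mul_div_mul_right _ _ hr.ne'] at this
  have hfar : ∀ k, ∀ w ∈ 𝔞 k \ B, ‖ζ k - w‖ / ‖ζ k - z₀‖ ≤ 2 * C₂ * r ^ α := by
    intro k w hw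
    have hwB : δ < ‖w - z₀‖ := by
      have := hw.2
      simp only [hBdef, Metric.mem_closedBall, not_le, dist_eq_norm] at this
      exact this
    have htri : ‖w - z₀‖ ≤ ‖ζ k - w‖ + ‖ζ k - z₀‖ := by
      calc ‖w - z₀‖ = ‖(w - ζ k) + (ζ k - z₀)‖ := by ring_nf
        _ ≤ ‖w - ζ k‖ + ‖ζ k - z₀‖ := norm_add_le _ _
        _ = ‖ζ k - w‖ + ‖ζ k - z₀‖ := by rw [norm_sub_rev]
    have hden : δ / 2 ≤ ‖ζ k - z₀‖ := by
      have h1 : ‖ζ k - w‖ ≤ C₂ * r := hζ k w hw.1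
      linarith
    have : ‖ζ k - w‖ / ‖ζ k - z₀‖ ≤ (C₂ * r) / (δ / 2) :=
      div_le_div₀ (by positivity) (hζ k w hw.1) (by positivity) hden
    calc ‖ζ k - w‖ / ‖ζ k - z₀‖ ≤ (C₂ * r) / (δ / 2) := this
      _ = 2 * C₂ * (r / δ) := by field_simp
      _ = 2 * C₂ * r ^ α := by rw [hrδ]
  -- finiteness of measures
  have hfin : ∀ s : Set ℂ, lam s ≠ ⊤ := fun s => (measure_lt_top lam s).ne
  -- per-k bound
  have hk : ∀ k, (∫ w in 𝔞 k, ‖ζ k - w‖ / ‖ζ k - z₀‖ ∂lam)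
      ≤ C₂ / c₃ * (lam (𝔞 k ∩ B)).toReal + 2 * C₂ * r ^ α * (lam (𝔞 k \ B)).toReal := by
    intro k
    have heq : (∫ w in 𝔞 k ∩ B, ‖ζ k - w‖ / ‖ζ k - z₀‖ ∂lam)
        + (∫ w in 𝔞 k \ B, ‖ζ k - w‖ / ‖ζ k - z₀‖ ∂lam)
        = ∫ w in 𝔞 k, ‖ζ k - w‖ / ‖ζ k - z₀‖ ∂lam :=
      integral_inter_add_diff hBm (hint k)
    have h1 : (∫ w in 𝔞 k ∩ B, ‖ζ k - w‖ / ‖ζ k - z₀‖ ∂lam)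
        ≤ C₂ / c₃ * (lam (𝔞 k ∩ B)).toReal := by
      have := norm_setIntegral_le_of_norm_le_const (f := fun w => ‖ζ k - w‖ / ‖ζ k - z₀‖)
        (measure_lt_top lam (𝔞 k ∩ B))
        (fun w hw => by
          rw [Real.norm_eq_abs, abs_of_nonneg (by positivity)]; exact hnear k w hw)
      exact le_trans (le_abs_self _) this
    have h2' : (∫ w in 𝔞 k \ B, ‖ζ k - w‖ / ‖ζ k - z₀‖ ∂lam)
        ≤ 2 * C₂ * r ^ α * (lam (𝔞 k \ B)).toReal := by
      have := norm_setIntegral_le_of_norm_le_const (f := fun w => ‖ζ k - w‖ / ‖ζ k - z₀‖)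
        (measure_lt_top lam (𝔞 k \ B))
        (fun w hw => by
          rw [Real.norm_eq_abs, abs_of_nonneg (by positivity)]; exact hfar k w hw)
      exact le_trans (le_abs_self _) this
    linarith
  -- sum the measures
  have hdisj1 : ∀ i j : Fin n, i ≠ j → Disjoint (𝔞 i ∩ B) (𝔞 j ∩ B) :=
    fun i j hij => ((h𝔞d hij).mono Set.inter_subset_left Set.inter_subset_left)
  have hdisj2 : ∀ i j : Fin n, i ≠ j → Disjoint (𝔞 i \ B) (𝔞 j \ B) :=
    fun i j hij => ((h𝔞d hij).mono Set.diff_subset Set.diff_subset)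
  have hsum1 : ∑ k, (lam (𝔞 k ∩ B)).toReal ≤ (lam B).toReal := by
    rw [← ENNReal.toReal_sum (fun k _ => hfin _)]
    apply ENNReal.toReal_mono (hfin _)
    rw [← measure_biUnion_finset
      (fun i _ j _ hij => hdisj1 i j hij) (fun k _ => (h𝔞m k).inter hBm)]
    exact measure_mono (Set.iUnion₂_subset fun k _ => Set.inter_subset_right)
  have hsum2 : ∑ k, (lam (𝔞 k \ B)).toReal ≤ L := by
    rw [← ENNReal.toReal_sum (fun k _ => hfin _)]
    apply ENNReal.toReal_mono (hfin _)
    rw [← measure_biUnion_finset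
      (fun i _ j _ hij => hdisj2 i j hij) (fun k _ => (h𝔞m k).diff hBm)]
    exact measure_mono (Set.subset_univ _)
  -- measure of the ball
  have hBall : (lam B).toReal ≤ C₁ * r ^ α := by
    have := hball δ hδ0
    have hδd : δ ^ d = r ^ α := by
      rw [hδdef, ← Real.rpow_mul hr.le, hαdef, one_div, inv_mul_eq_div]
    rwa [hδd] at this
  -- put it together
  calc (∑ k, ∫ w in 𝔞 k, ‖ζ k - w‖ / ‖ζ k - z₀‖ ∂lam)
      ≤ ∑ k, (C₂ / c₃ * (lam (𝔞 k ∩ B)).toReal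
          + 2 * C₂ * r ^ α * (lam (𝔞 k \ B)).toReal) :=
        Finset.sum_le_sum fun k _ => hk k
    _ = C₂ / c₃ * (∑ k, (lam (𝔞 k ∩ B)).toReal)
          + 2 * C₂ * r ^ α * (∑ k, (lam (𝔞 k \ B)).toReal) := by
        rw [Finset.sum_add_distrib, Finset.mul_sum, Finset.mul_sum]
    _ ≤ C₂ / c₃ * (C₁ * r ^ α) + 2 * C₂ * r ^ α * L := by
        gcongr
        exact le_trans hsum1 hBall
    _ = (C₂ * C₁ / c₃ + 2 * C₂ * L) * r ^ α := by ring
    _ ≤ (C₂ * C₁ / c₃ + 2 * C₂ * L + 1) * r ^ α := by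
        apply mul_le_mul_of_nonneg_right (by linarith) hR0.le
end
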